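/- Let D be a domain (a nonempty open connected subset) in ℂ, let (Ω, 𝒜) be a measurable space, and let f : Ω × D → ℂ be such that f(ω,·) is holomorphic on D for each ω ∈ Ω. Define M := { z ∈ D : the function ω ↦ f(ω,z) is measurable }. If M has a limit point in D (i.e., some point of D is an accumulation point of M), then M = D. -/

import Mathlib

open Metric Filter Set Asymptotics
open scoped Topology NNReal ENNReal

/-- Auxiliary: if `f ω` is holomorphic on a closed ball around `c`, `ω ↦ f ω z` is measurable
for all `z` in a set `M` accumulating at `c`, then `ω ↦ f ω z` is measurable for every `z`
in the open ball. -/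
lemma local_meas_aux {Ω : Type*} [MeasurableSpace Ω] {M : Set ℂ}
    (f : Ω → ℂ → ℂ) (hMeas : ∀ z ∈ M, Measurable fun ω => f ω z)
    {c : ℂ} {R : ℝ≥0} (hR : 0 < R)
    (hd : ∀ ω, DifferentiableOn ℂ (f ω) (Metric.closedBall c R))
    (hacc : AccPt c (Filter.principal M)) :
    ∀ z ∈ Metric.ball c (R : ℝ), Measurable fun ω => f ω z := by
  have hp : ∀ ω, HasFPowerSeriesOnBall (f ω) (cauchyPowerSeries (f ω) c R) c R :=
    fun ω => (hd ω).hasFPowerSeriesOnBall hR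
  -- a sequence in `M \ {c}` tending to `c`
  obtain ⟨zs, hzsM, hzsne, hzs⟩ : ∃ zs : ℕ → ℂ, (∀ k, zs k ∈ M) ∧ (∀ k, zs k ≠ c) ∧
      Tendsto zs atTop (𝓝 c) := by
    have h := accPt_iff_nhds.1 hacc
    choose zs hmem hne using fun k : ℕ =>
      h (Metric.ball c (1 / (k + 1))) (Metric.ball_mem_nhds _ (by positivity))
    refine ⟨zs, fun k => (hmem k).2, hne, tendsto_iff_dist_tendsto_zero.2 ?_⟩
    refine squeeze_zero (fun k => dist_nonneg) (fun k => (mem_ball.1 (hmem k).1).le) ?_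
    exact tendsto_one_div_add_atTop_nhds_zero_nat
  set y : ℕ → ℂ := fun k => zs k - c with hy_def
  have hy0 : ∀ k, y k ≠ 0 := fun k => sub_ne_zero.2 (hzsne k)
  have hyt : Tendsto y atTop (𝓝 0) := by
    have := hzs.sub_const c
    simpa using this
  set a : ℕ → Ω → ℂ := fun n ω => (cauchyPowerSeries (f ω) c R).coeff n with ha_def
  -- measurability of the Taylor coefficients, by strong induction
  have hcoeff : ∀ n, Measurable (a n) := by
    intro n
    induction n using Nat.strong_induction_on with
    | _ n IH =>
      have key : ∀ ω, Tendsto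
          (fun k => (f ω (zs k) - ∑ j ∈ Finset.range n, a j ω * (y k) ^ j) / (y k) ^ n)
          atTop (𝓝 (a n ω)) := by
        intro ω
        have hO := ((hp ω).hasFPowerSeriesAt.isBigO_sub_partialSum_pow (n + 1)).comp_tendsto hyt
        rw [Asymptotics.isBigO_iff] at hO
        obtain ⟨C, hC⟩ := hO
        have hps : ∀ k, (cauchyPowerSeries (f ω) c R).partialSum (n + 1) (y k)
            = (∑ j ∈ Finset.range n, a j ω * (y k) ^ j) + a n ω * (y k) ^ n := by
          intro k
          rw [FormalMultilinearSeries.partialSum, Finset.sum_range_succ]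
          congr 1
          · refine Finset.sum_congr rfl fun j _ => ?_
            rw [FormalMultilinearSeries.apply_eq_pow_smul_coeff, smul_eq_mul, mul_comm]
          · rw [FormalMultilinearSeries.apply_eq_pow_smul_coeff, smul_eq_mul, mul_comm]
        have heq : ∀ k,
            (f ω (zs k) - ∑ j ∈ Finset.range n, a j ω * (y k) ^ j) / (y k) ^ n
            = (f ω (c + y k) - (cauchyPowerSeries (f ω) c R).partialSum (n + 1) (y k))
                / (y k) ^ n + a n ω := by
          intro k
          have hz : c + y k = zs k := by show c + (zs k - c) = zs k; ring
          rw [hz, hps k]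
          have hyn : (y k) ^ n ≠ 0 := pow_ne_zero _ (hy0 k)
          field_simp
          ring
        have h0 : Tendsto (fun k =>
            (f ω (c + y k) - (cauchyPowerSeries (f ω) c R).partialSum (n + 1) (y k))
              / (y k) ^ n) atTop (𝓝 0) := by
          refine squeeze_zero_norm' (a := fun k => C * ‖y k‖) ?_ ?_
          · filter_upwards [hC] with k hk
            have hypos : 0 < ‖y k‖ := norm_pos_iff.2 (hy0 k)
            have : ‖f ω (c + y k) - (cauchyPowerSeries (f ω) c R).partialSum (n + 1) (y k)‖
                ≤ C * ‖y k‖ ^ (n + 1) := by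
              simpa [Function.comp, norm_pow] using hk
            rw [norm_div, norm_pow]
            calc ‖f ω (c + y k) - (cauchyPowerSeries (f ω) c R).partialSum (n + 1) (y k)‖
                  / ‖y k‖ ^ n ≤ (C * ‖y k‖ ^ (n + 1)) / ‖y k‖ ^ n := by
                  exact div_le_div_of_nonneg_right this (by positivity) |>.trans_eq rfl
              _ = C * ‖y k‖ := by
                  rw [pow_succ, mul_div_assoc,
                    mul_div_cancel_left₀ _ (pow_ne_zero n (ne_of_gt hypos))]
          · have := (hyt.norm).const_mul C
            simpa using this
        have := h0.add_const (a n ω)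
        rw [zero_add] at this
        exact this.congr fun k => (heq k).symm
      have hmeask : ∀ k, Measurable (fun ω =>
          (f ω (zs k) - ∑ j ∈ Finset.range n, a j ω * (y k) ^ j) / (y k) ^ n) := by
        intro k
        refine Measurable.div_const ?_ _
        refine (hMeas (zs k) (hzsM k)).sub ?_
        exact Finset.measurable_sum _ fun j hj =>
          (IH j (Finset.mem_range.1 hj)).mul_const _
      exact measurable_of_tendsto_metrizable hmeask (tendsto_pi_nhds.2 key)
  -- now conclude for any point in the open ball
  intro z hz
  have hzmem : z - c ∈ Metric.eball (0 : ℂ) (R : ℝ≥0∞) := by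
    rw [EMetric.mem_ball, edist_zero_right]
    have : ‖z - c‖ < (R : ℝ) := by rwa [mem_ball, dist_eq_norm] at hz
    exact_mod_cast this
  have hts : ∀ ω, Tendsto (fun m => (cauchyPowerSeries (f ω) c R).partialSum m (z - c))
      atTop (𝓝 (f ω z)) := by
    intro ω
    have := (hp ω).tendsto_partialSum hzmem
    simpa using this
  refine measurable_of_tendsto_metrizable (f := fun m ω =>
      (cauchyPowerSeries (f ω) c R).partialSum m (z - c)) ?_ (tendsto_pi_nhds.2 hts)
  intro m
  have : (fun ω => (cauchyPowerSeries (f ω) c R).partialSum m (z - c))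
      = fun ω => ∑ j ∈ Finset.range m, (z - c) ^ j * a j ω := by
    funext ω
    rw [FormalMultilinearSeries.partialSum]
    exact Finset.sum_congr rfl fun j _ => by
      rw [FormalMultilinearSeries.apply_eq_pow_smul_coeff, smul_eq_mul]
  show Measurable fun ω => (cauchyPowerSeries (f ω) c ↑R).partialSum m (z - c)
  rw [this]
  exact Finset.measurable_sum _ fun j _ => (hcoeff j).const_mul _

/-- measurable identity principle, Lemma `domain` of the paper.
Let `D ⊆ ℂ` be a domain (nonempty open connected set), `(Ω, 𝒜)` a measurable space, and
`f : Ω × D → ℂ` with `f (ω, ·)` holomorphic on `D` for each `ω`. Let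
`M := { z ∈ D : ω ↦ f ω z is measurable }`. If `M` has a limit point in `D`, then `M = D`. -/
theorem measurable_identity_principle
    {Ω : Type*} [MeasurableSpace Ω] {D : Set ℂ}
    (hD_open : IsOpen D) (hD_conn : IsConnected D)
    (f : Ω → ℂ → ℂ) (hf : ∀ ω, DifferentiableOn ℂ (f ω) D)
    (M : Set ℂ) (hM : M = {z ∈ D | Measurable fun ω => f ω z})
    (hlim : ∃ z ∈ D, AccPt z (Filter.principal M)) :
    M = D := by
  have hMsub : M ⊆ D := by rw [hM]; exact sep_subset _ _
  have hMmeas : ∀ z ∈ M, Measurable fun ω => f ω z := by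
    intro z hz; rw [hM] at hz; exact hz.2
  -- each accumulation point of M inside D has a ball contained in M
  have key : ∀ c ∈ D, AccPt c (Filter.principal M) →
      ∃ ε > (0 : ℝ), Metric.ball c ε ⊆ M ∧ Metric.ball c ε ⊆ D := by
    intro c hc hacc
    obtain ⟨R, hR0, hRD⟩ := nhds_basis_closedBall.mem_iff.1 (hD_open.mem_nhds hc)
    lift R to ℝ≥0 using hR0.le
    have hR0' : (0 : ℝ≥0) < R := by exact_mod_cast hR0
    have hball := local_meas_aux f hMmeas hR0' (fun ω => (hf ω).mono hRD) hacc
    refine ⟨R, hR0, ?_, fun x hx => hRD (ball_subset_closedBall hx)⟩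
    intro x hx
    rw [hM]
    exact ⟨hRD (ball_subset_closedBall hx), hball x hx⟩
  -- clopen argument on D
  have hopenU : IsOpen (D ∩ derivedSet M) := by
    rw [Metric.isOpen_iff]
    rintro x ⟨hxD, hxA⟩
    obtain ⟨ε, hε, hballM, hballD⟩ := key x hxD hxA
    refine ⟨ε, hε, fun w hw => ⟨hballD hw, ?_⟩⟩
    have hw' : AccPt w (Filter.principal (Metric.ball x ε)) := by
      have hmem : Metric.ball x ε ∈ 𝓝[≠] w :=
        mem_nhdsWithin_of_mem_nhds (Metric.isOpen_ball.mem_nhds hw)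
      rw [AccPt, inf_eq_left.2 (le_principal_iff.2 hmem)]
      infer_instance
    exact hw'.mono (principal_mono.2 hballM)
  have hopenV : IsOpen (derivedSet M)ᶜ := (isClosed_derivedSet M).isOpen_compl
  have hdisj : Disjoint (D ∩ derivedSet M) (derivedSet M)ᶜ :=
    disjoint_compl_right.mono_left inter_subset_right
  have hsub : D ⊆ (D ∩ derivedSet M) ∪ (derivedSet M)ᶜ := by
    intro x hx
    by_cases h : x ∈ derivedSet M
    · exact Or.inl ⟨hx, h⟩
    · exact Or.inr h
  obtain ⟨z0, hz0D, hz0acc⟩ := hlim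
  have hne : (D ∩ (D ∩ derivedSet M)).Nonempty := ⟨z0, hz0D, hz0D, hz0acc⟩
  have hDsub : D ⊆ D ∩ derivedSet M :=
    hD_conn.isPreconnected.subset_left_of_subset_union hopenU hopenV hdisj hsub hne
  apply Subset.antisymm hMsub
  intro z hz
  obtain ⟨ε, hε, hballM, _⟩ := key z hz (hDsub hz).2
  exact hballM (Metric.mem_ball_self hε)
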